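/- Let v₁,…,vₙ ∈ ℝ^d and let t be an integer with 0 ≤ t and n−2t ≥ 1. Then diam(S₂) ≤ (2(n−t)/(n−2t)) · diam(S_Cent). In particular, if 7t < n, then diam(S₂) ≤ (14/5) · diam(S_Cent). -/
import Mathlib


/-- The set of possible centroids: centroids of all `(n-t)`-element subsets of the `n` input
vectors. -/
def SCent (n d t : ℕ) (v : Fin n → EuclideanSpace ℝ (Fin d)) :
    Set (EuclideanSpace ℝ (Fin d)) :=
  {x | ∃ I : Finset (Fin n), I.card = n - t ∧ x = (1 / ((n - t : ℕ) : ℝ)) • ∑ i ∈ I, v i}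

/-- `S₂`: the set of centroids of all `(n-2t)`-element subsets of the `n` input vectors. -/
def S₂ (n d t : ℕ) (v : Fin n → EuclideanSpace ℝ (Fin d)) :
    Set (EuclideanSpace ℝ (Fin d)) :=
  {x | ∃ I : Finset (Fin n), I.card = n - 2 * t ∧
    x = (1 / ((n - 2 * t : ℕ) : ℝ)) • ∑ i ∈ I, v i}

lemma sCent_finite (n d t : ℕ) (v : Fin n → EuclideanSpace ℝ (Fin d)) :
    (SCent n d t v).Finite := by
  apply Set.Finite.subset (Set.finite_range
    (fun I : Finset (Fin n) => (1 / ((n - t : ℕ) : ℝ)) • ∑ i ∈ I, v i))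
  rintro x ⟨I, -, rfl⟩
  exact ⟨I, rfl⟩

lemma key_bound (n d t : ℕ) (h : 1 ≤ n - 2 * t) (v : Fin n → EuclideanSpace ℝ (Fin d))
    (P Q : Finset (Fin n)) (hPQ : Disjoint P Q) (hcard : P.card = Q.card)
    (hPt : P.card ≤ t) :
    ‖∑ i ∈ P, v i - ∑ i ∈ Q, v i‖ ≤ ((n - t : ℕ) : ℝ) * Metric.diam (SCent n d t v) := by
  have h2t : 2 * t + 1 ≤ n := by omega
  have hQt : Q.card ≤ t := hcard ▸ hPt
  have hPsub : P ⊆ Finset.univ \ Q := by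
    intro i hi
    simp only [Finset.mem_sdiff, Finset.mem_univ, true_and]
    exact fun hq => (Finset.disjoint_left.mp hPQ hi) hq
  have hcardc : (Finset.univ \ Q : Finset (Fin n)).card = n - Q.card := by
    rw [Finset.card_sdiff_of_subset (Finset.subset_univ Q)]
    simp
  obtain ⟨K, hPK, hKc, hK⟩ := Finset.exists_subsuperset_card_eq (n := n - t) hPsub
    (by omega) (by rw [hcardc]; omega)
  have hKQ : Disjoint K Q := by
    rw [Finset.disjoint_left]
    intro i hi
    have := hKc hi
    simp only [Finset.mem_sdiff] at this
    exact this.2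
  set K' : Finset (Fin n) := (K \ P) ∪ Q with hK'def
  have hK'card : K'.card = n - t := by
    rw [hK'def, Finset.card_union_of_disjoint (Finset.disjoint_of_subset_left
      (Finset.sdiff_subset) hKQ), Finset.card_sdiff_of_subset hPK]
    omega
  have hsumK : ∑ i ∈ K, v i = ∑ i ∈ K \ P, v i + ∑ i ∈ P, v i := (Finset.sum_sdiff hPK).symm
  have hsumK' : ∑ i ∈ K', v i = ∑ i ∈ K \ P, v i + ∑ i ∈ Q, v i :=
    Finset.sum_union (Finset.disjoint_of_subset_left (Finset.sdiff_subset) hKQ)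
  have hM : (0:ℝ) < ((n - t : ℕ) : ℝ) := by
    have : 1 ≤ n - t := by omega
    exact_mod_cast Nat.lt_of_lt_of_le Nat.zero_lt_one this
  set cK := (1 / ((n - t : ℕ) : ℝ)) • ∑ i ∈ K, v i with hcK
  set cK' := (1 / ((n - t : ℕ) : ℝ)) • ∑ i ∈ K', v i with hcK'
  have hmem1 : cK ∈ SCent n d t v := ⟨K, hK, rfl⟩
  have hmem2 : cK' ∈ SCent n d t v := ⟨K', hK'card, rfl⟩
  have hdist : dist cK cK' ≤ Metric.diam (SCent n d t v) :=
    Metric.dist_le_diam_of_mem (sCent_finite n d t v).isBounded hmem1 hmem2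
  have heq : dist cK cK' = (1 / ((n - t : ℕ) : ℝ)) * ‖∑ i ∈ P, v i - ∑ i ∈ Q, v i‖ := by
    rw [dist_eq_norm, hcK, hcK', ← smul_sub, norm_smul]
    congr 1
    · simp [abs_of_pos, hM, le_of_lt hM]
    · congr 1
      rw [hsumK, hsumK']
      abel
  rw [heq] at hdist
  rw [div_mul_eq_mul_div, one_mul, div_le_iff₀ hM] at hdist
  linarith [hdist]

theorem diam_S₂_le (n d t : ℕ) (h : 1 ≤ n - 2 * t)
    (v : Fin n → EuclideanSpace ℝ (Fin d)) :
    Metric.diam (S₂ n d t v)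
      ≤ (2 * ((n - t : ℕ) : ℝ) / ((n - 2 * t : ℕ) : ℝ)) * Metric.diam (SCent n d t v) ∧
    (7 * t < n →
      Metric.diam (S₂ n d t v) ≤ (14 / 5) * Metric.diam (SCent n d t v)) := by
  have hm : (0:ℝ) < ((n - 2 * t : ℕ) : ℝ) := by exact_mod_cast h
  have hdiamN : 0 ≤ Metric.diam (SCent n d t v) := Metric.diam_nonneg
  have main : Metric.diam (S₂ n d t v)
      ≤ (2 * ((n - t : ℕ) : ℝ) / ((n - 2 * t : ℕ) : ℝ)) * Metric.diam (SCent n d t v) := by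
    apply Metric.diam_le_of_forall_dist_le
    · apply mul_nonneg _ hdiamN
      positivity
    rintro x ⟨I, hI, rfl⟩ y ⟨J, hJ, rfl⟩
    -- A = I \ J, B = J \ I
    set A := I \ J with hA
    set B := J \ I with hB
    have hab : A.card = B.card := Finset.card_sdiff_comm (hI.trans hJ.symm)
    have haB : B.card ≤ 2 * t := by
      have h1 : B.card + I.card = (J ∪ I).card := Finset.card_sdiff_add_card J I
      have h2 : (J ∪ I).card ≤ n := (Finset.card_le_univ _).trans (by simp)
      omega
    have haA : A.card ≤ 2 * t := hab ▸ haB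
    -- split A and B
    obtain ⟨A₁, hA₁A, hA₁⟩ := Finset.exists_subset_card_eq (min_le_left A.card t)
    obtain ⟨B₁, hB₁B, hB₁⟩ := Finset.exists_subset_card_eq
      (le_of_le_of_eq (min_le_left A.card t) hab)
    set A₂ := A \ A₁ with hA₂def
    set B₂ := B \ B₁ with hB₂def
    have hA₂ : A₂.card = A.card - min A.card t := by
      rw [hA₂def, Finset.card_sdiff_of_subset hA₁A, hA₁]
    have hB₂ : B₂.card = A.card - min A.card t := by
      rw [hB₂def, Finset.card_sdiff_of_subset hB₁B, hB₁, ← hab]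
    have hABdisj : Disjoint A B := by
      rw [hA, hB]
      exact disjoint_sdiff_sdiff
    have hd1 : Disjoint A₁ B₁ :=
      Finset.disjoint_of_subset_left hA₁A (Finset.disjoint_of_subset_right hB₁B hABdisj)
    have hd2 : Disjoint A₂ B₂ :=
      Finset.disjoint_of_subset_left Finset.sdiff_subset
        (Finset.disjoint_of_subset_right Finset.sdiff_subset hABdisj)
    have key1 := key_bound n d t h v A₁ B₁ hd1 (hA₁.trans hB₁.symm)
      (by rw [hA₁]; exact min_le_right _ _)
    have key2 := key_bound n d t h v A₂ B₂ hd2 (hA₂.trans hB₂.symm)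
      (by rw [hA₂]; omega)
    -- sum decomposition
    have hsplitA : ∑ i ∈ A, v i = ∑ i ∈ A₁, v i + ∑ i ∈ A₂, v i := by
      rw [hA₂def, eq_comm, add_comm]
      exact Finset.sum_sdiff hA₁A
    have hsplitB : ∑ i ∈ B, v i = ∑ i ∈ B₁, v i + ∑ i ∈ B₂, v i := by
      rw [hB₂def, eq_comm, add_comm]
      exact Finset.sum_sdiff hB₁B
    have hIJ : ∑ i ∈ I, v i - ∑ i ∈ J, v i = ∑ i ∈ A, v i - ∑ i ∈ B, v i := by
      have h1 : ∑ i ∈ I ∩ J, v i + ∑ i ∈ I \ J, v i = ∑ i ∈ I, v i :=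
        Finset.sum_inter_add_sum_sdiff I J v
      have h2 : ∑ i ∈ J ∩ I, v i + ∑ i ∈ J \ I, v i = ∑ i ∈ J, v i :=
        Finset.sum_inter_add_sum_sdiff J I v
      rw [Finset.inter_comm] at h2
      rw [hA, hB, ← h1, ← h2]
      abel
    have hnorm : ‖∑ i ∈ I, v i - ∑ i ∈ J, v i‖
        ≤ 2 * ((n - t : ℕ) : ℝ) * Metric.diam (SCent n d t v) := by
      rw [hIJ, hsplitA, hsplitB]
      have : (∑ i ∈ A₁, v i + ∑ i ∈ A₂, v i) - (∑ i ∈ B₁, v i + ∑ i ∈ B₂, v i)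
          = (∑ i ∈ A₁, v i - ∑ i ∈ B₁, v i) + (∑ i ∈ A₂, v i - ∑ i ∈ B₂, v i) := by abel
      rw [this]
      calc ‖(∑ i ∈ A₁, v i - ∑ i ∈ B₁, v i) + (∑ i ∈ A₂, v i - ∑ i ∈ B₂, v i)‖
          ≤ ‖∑ i ∈ A₁, v i - ∑ i ∈ B₁, v i‖ + ‖∑ i ∈ A₂, v i - ∑ i ∈ B₂, v i‖ :=
            norm_add_le _ _
        _ ≤ _ := by linarith [key1, key2]
    rw [dist_eq_norm, ← smul_sub, norm_smul]
    have habs : ‖(1 / ((n - 2 * t : ℕ) : ℝ))‖ = 1 / ((n - 2 * t : ℕ) : ℝ) := by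
      rw [Real.norm_eq_abs, abs_of_pos]; positivity
    rw [habs]
    rw [div_mul_eq_mul_div, one_mul, div_le_iff₀ hm] at *
    calc ‖∑ i ∈ I, v i - ∑ i ∈ J, v i‖
        ≤ 2 * ((n - t : ℕ) : ℝ) * Metric.diam (SCent n d t v) := hnorm
      _ = 2 * ((n - t : ℕ) : ℝ) / ((n - 2 * t : ℕ) : ℝ) * Metric.diam (SCent n d t v)
          * ((n - 2 * t : ℕ) : ℝ) := by field_simp
  refine ⟨main, fun h7 => ?_⟩
  refine main.trans ?_
  apply mul_le_mul_of_nonneg_right _ hdiamN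
  rw [div_le_div_iff₀ hm (by norm_num : (0:ℝ) < 5)]
  have hnat : 5 * (2 * (n - t)) ≤ 14 * (n - 2 * t) := by omega
  calc 2 * ((n - t : ℕ) : ℝ) * 5 = ((5 * (2 * (n - t)) : ℕ) : ℝ) := by push_cast; ring
    _ ≤ ((14 * (n - 2 * t) : ℕ) : ℝ) := by exact_mod_cast hnat
    _ = 14 * ((n - 2 * t : ℕ) : ℝ) := by push_cast; ring
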